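/- If $u$ is a leaf of a graph $G$ with neighbor $v$, then $Z_-(G - \{u, v\}) = Z_-(G)$. -/

import Mathlib

open SimpleGraph

variable {V : Type*}

/-- A skew fort: a nonempty vertex set `F` such that no vertex of the graph
has exactly one neighbor in `F`. -/
def SkewFort (G : SimpleGraph V) (F : Set V) : Prop :=
  F.Nonempty ∧ ∀ v : V, (G.neighborSet v ∩ F).ncard ≠ 1

/-- The vertices eventually forced blue by the skew color change rule starting
from the set `S` of initially blue vertices: a vertex `v` is forced if some
vertex `u` has `v` as its unique non-blue neighbor. -/
inductive SkewForced (G : SimpleGraph V) (S : Set V) : V → Prop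
  | mem : ∀ {v}, v ∈ S → SkewForced G S v
  | force : ∀ {u v}, G.Adj u v → (∀ w, G.Adj u w → w ≠ v → SkewForced G S w) →
      SkewForced G S v

/-- The skew closure of `S`: the final set of blue vertices. -/
def skewClosure (G : SimpleGraph V) (S : Set V) : Set V := {v | SkewForced G S v}

/-- `S` is a skew forcing set if its skew closure is everything. -/
def IsSkewForcingSet (G : SimpleGraph V) (S : Set V) : Prop :=
  skewClosure G S = Set.univ

/-- The skew forcing number: minimum cardinality of a skew forcing set. -/
noncomputable def skewForcingNumber (G : SimpleGraph V) : ℕ :=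
  sInf {n | ∃ S : Set V, S.ncard = n ∧ IsSkewForcingSet G S}

/-! ### Auxiliary lemmas -/

lemma skewForced_mono {G : SimpleGraph V} {B B₂ : Set V} (h : B ⊆ B₂) {x : V}
    (hx : SkewForced G B x) : SkewForced G B₂ x := by
  induction hx with
  | mem hx => exact .mem (h hx)
  | force hadj hprem ih => exact .force hadj ih

/-- If `T` is closed under the skew force rule and contains `B`, it contains the closure. -/
lemma skewForced_closed {G : SimpleGraph V} {B T : Set V}
    (hT : ∀ w x, G.Adj w x → (∀ y, G.Adj w y → y ≠ x → y ∈ T) → x ∈ T)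
    (hBT : B ⊆ T) {x : V} (hx : SkewForced G B x) : x ∈ T := by
  induction hx with
  | mem hx => exact hBT hx
  | force hadj hprem ih => exact hT _ _ hadj ih

lemma univ_isSkewForcingSet {W : Type*} (H : SimpleGraph W) :
    IsSkewForcingSet H Set.univ := by
  apply Set.eq_univ_of_forall
  intro x
  exact SkewForced.mem (Set.mem_univ x)

section Leaf

variable {G : SimpleGraph V} {u v : V}

lemma adj_u_iff (huv : G.neighborSet u = {v}) {w : V} : G.Adj u w ↔ w = v := by
  rw [← SimpleGraph.mem_neighborSet, huv, Set.mem_singleton_iff]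

lemma adj_uv (huv : G.neighborSet u = {v}) : G.Adj u v := (adj_u_iff huv).mpr rfl

lemma mem_compl_pair {x : V} : x ∈ ({u, v}ᶜ : Set V) ↔ x ≠ u ∧ x ≠ v := by
  simp [not_or]

/-- `v` is forced from any starting set, since `u` has `v` as unique neighbor. -/
lemma forced_v (huv : G.neighborSet u = {v}) (B : Set V) : SkewForced G B v :=
  SkewForced.force (adj_uv huv) (fun w hw hwv => absurd ((adj_u_iff huv).mp hw) hwv)

lemma drop_v (huv : G.neighborSet u = {v}) {B : Set V} {x : V}
    (hx : SkewForced G B x) : SkewForced G (B \ {v}) x := by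
  induction hx with
  | @mem x hx =>
    by_cases hxv : x = v
    · rw [hxv]; exact forced_v huv _
    · exact .mem ⟨hx, hxv⟩
  | force hadj hprem ih => exact .force hadj ih

/-- Key transfer lemma: if `u, v ∉ B`, then every vertex forced in `G` from `B`
is either `v`, or `u` (in which case all other neighbors of `v` are forced in
the induced graph), or is forced in the induced graph. -/
lemma skewKey (huv : G.neighborSet u = {v}) {B : Set V} (hu : u ∉ B) (hv : v ∉ B) {x : V}
    (hx : SkewForced G B x) :
    x = v ∨
    (x = u ∧ ∀ y, G.Adj v y → y ≠ u → ∃ h : y ∈ ({u, v}ᶜ : Set V),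
        SkewForced (G.induce ({u, v}ᶜ : Set V)) (Subtype.val ⁻¹' B) ⟨y, h⟩) ∨
    (∃ h : x ∈ ({u, v}ᶜ : Set V),
        SkewForced (G.induce ({u, v}ᶜ : Set V)) (Subtype.val ⁻¹' B) ⟨x, h⟩) := by
  induction hx with
  | mem hx =>
    refine Or.inr (Or.inr ⟨mem_compl_pair.mpr ⟨?_, ?_⟩, .mem hx⟩)
    · rintro rfl; exact hu hx
    · rintro rfl; exact hv hx
  | @force w x hadj hprem ih =>
    by_cases hwu : w = u
    · subst hwu; exact Or.inl ((adj_u_iff huv).mp hadj)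
    by_cases hwv : w = v
    · subst hwv
      by_cases hxu : x = u
      · subst hxu
        refine Or.inr (Or.inl ⟨rfl, fun y hy hyu => ?_⟩)
        rcases ih y hy hyu with h | h | h
        · exact absurd h.symm hy.ne
        · exact absurd h.1 hyu
        · exact h
      · have hux : u ≠ x := fun h => hxu h.symm
        rcases ih u (adj_uv huv).symm hux with h | h | h
        · exact absurd h (G.ne_of_adj (adj_uv huv))
        · exact Or.inr (Or.inr (h.2 x hadj hxu))
        · exact absurd (mem_compl_pair.mp h.choose).1 (by simp)
    · -- w ∉ {u, v}
      have hxu : x ≠ u := by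
        rintro rfl
        exact hwv ((adj_u_iff huv).mp hadj.symm)
      by_cases hxv : x = v
      · exact Or.inl hxv
      have hxm : x ∈ ({u, v}ᶜ : Set V) := mem_compl_pair.mpr ⟨hxu, hxv⟩
      have hwm : w ∈ ({u, v}ᶜ : Set V) := mem_compl_pair.mpr ⟨hwu, hwv⟩
      refine Or.inr (Or.inr ⟨hxm, .force (u := ⟨w, hwm⟩) (show (G.induce ({u, v}ᶜ : Set V)).Adj ⟨w, hwm⟩ ⟨x, hxm⟩ from hadj) ?_⟩)
      rintro ⟨y, hym⟩ hy hyx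
      have hy' : G.Adj w y := hy
      have hyx' : y ≠ x := fun h => hyx (Subtype.ext h)
      rcases ih y hy' hyx' with h | h | h
      · exact absurd (mem_compl_pair.mp hym).2 (by simp [h])
      · exact absurd (mem_compl_pair.mp hym).1 (by simp [h.1])
      · obtain ⟨h1, h2⟩ := h
        exact h2

lemma skewForcingRestrict (huv : G.neighborSet u = {v}) {B : Set V} (hu : u ∉ B) (hv : v ∉ B)
    (hB : IsSkewForcingSet G B) :
    IsSkewForcingSet (G.induce ({u, v}ᶜ : Set V)) (Subtype.val ⁻¹' B) := by
  apply Set.eq_univ_of_forall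
  rintro ⟨x, hxm⟩
  have hx : SkewForced G B x := by
    have : x ∈ skewClosure G B := hB.symm ▸ Set.mem_univ x
    exact this
  rcases skewKey huv hu hv hx with h | h | h
  · exact absurd (mem_compl_pair.mp hxm).2 (by simp [h])
  · exact absurd (mem_compl_pair.mp hxm).1 (by simp [h.1])
  · exact h.choose_spec

/-- Lifting forcing in the induced graph to forcing in `G`. -/
lemma skewLift (huv : G.neighborSet u = {v}) {B' : Set ↥({u, v}ᶜ : Set V)}
    {x' : ↥({u, v}ᶜ : Set V)}
    (hx : SkewForced (G.induce ({u, v}ᶜ : Set V)) B' x') :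
    SkewForced G ((Subtype.val '' B' : Set V)) (x' : V) := by
  induction hx with
  | mem h => exact .mem ⟨_, h, rfl⟩
  | @force w' y' hadj hprem ih =>
    have hadj' : G.Adj ↑w' ↑y' := hadj
    refine .force hadj' ?_
    intro y hy hyx
    by_cases hyv : y = v
    · subst hyv; exact forced_v huv _
    have hyu : y ≠ u := by
      rintro rfl
      exact (mem_compl_pair.mp w'.2).2 ((adj_u_iff huv).mp hy.symm)
    have hym : y ∈ ({u, v}ᶜ : Set V) := mem_compl_pair.mpr ⟨hyu, hyv⟩
    have hyadj : (G.induce ({u, v}ᶜ : Set V)).Adj w' ⟨y, hym⟩ := hy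
    exact ih ⟨y, hym⟩ hyadj (fun h => hyx (congrArg Subtype.val h))

lemma skewForcingLift (huv : G.neighborSet u = {v}) {B' : Set ↥({u, v}ᶜ : Set V)}
    (hB' : IsSkewForcingSet (G.induce ({u, v}ᶜ : Set V)) B') :
    IsSkewForcingSet G (Subtype.val '' B') := by
  have hall : ∀ x' : ↥({u, v}ᶜ : Set V), SkewForced G ((Subtype.val '' B' : Set V)) (x' : V) := by
    intro x'
    have : SkewForced (G.induce ({u, v}ᶜ : Set V)) B' x' := by
      have := hB'.symm ▸ Set.mem_univ x'
      exact this
    exact skewLift huv this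
  apply Set.eq_univ_of_forall
  intro x
  by_cases hxv : x = v
  · subst hxv; exact forced_v huv _
  by_cases hxu : x = u
  · subst hxu
    refine SkewForced.force (adj_uv huv).symm ?_
    intro y hy hyu
    have hyv : y ≠ v := hy.ne'
    exact hall ⟨y, mem_compl_pair.mpr ⟨hyu, hyv⟩⟩
  · exact hall ⟨x, mem_compl_pair.mpr ⟨hxu, hxv⟩⟩

/-- Normalization: any forcing set of `G` can be replaced by one of no larger
cardinality avoiding both `u` and `v`. -/
lemma skewNormalize [Fintype V] (huv : G.neighborSet u = {v}) {B : Set V}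
    (hB : IsSkewForcingSet G B) :
    ∃ B₂ : Set V, u ∉ B₂ ∧ v ∉ B₂ ∧ B₂.ncard ≤ B.ncard ∧ IsSkewForcingSet G B₂ := by
  classical
  set B₁ : Set V := B \ {v} with hB₁def
  have hB₁ : IsSkewForcingSet G B₁ := by
    apply Set.eq_univ_of_forall
    intro x
    have hx : SkewForced G B x := by
      have : x ∈ skewClosure G B := hB.symm ▸ Set.mem_univ x
      exact this
    exact drop_v huv hx
  have hB₁card : B₁.ncard ≤ B.ncard :=
    Set.ncard_le_ncard Set.diff_subset B.toFinite
  have hvB₁ : v ∉ B₁ := fun h => h.2 rfl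
  have hB₁all : ∀ x, SkewForced G B₁ x := by
    intro x
    have : x ∈ skewClosure G B₁ := hB₁.symm ▸ Set.mem_univ x
    exact this
  by_cases hu1 : u ∈ B₁
  · set B₀ : Set V := B₁ \ {u} with hB₀def
    have huB₀ : u ∉ B₀ := fun h => h.2 rfl
    have hvB₀ : v ∉ B₀ := fun h => hvB₁ h.1
    have hB₀card : B₀.ncard + 1 = B₁.ncard := Set.ncard_diff_singleton_add_one hu1
    set C : Set V := skewClosure G B₀ with hCdef
    have hCclosed : ∀ w x, G.Adj w x → (∀ y, G.Adj w y → y ≠ x → y ∈ C) → x ∈ C :=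
      fun w x hwx hprem => SkewForced.force hwx hprem
    by_cases huC : u ∈ C
    · -- B₀ already forces everything
      refine ⟨B₀, huB₀, hvB₀, le_trans (by omega) hB₁card, ?_⟩
      apply Set.eq_univ_of_forall
      intro x
      have : x ∈ C :=
        skewForced_closed hCclosed
          (fun y hy => by
            rcases hy with ⟨hyB, hyv⟩
            by_cases hyu : y = u
            · exact hyu ▸ huC
            · exact SkewForced.mem ⟨⟨hyB, hyv⟩, hyu⟩)
          (hB₁all x)
      exact this
    · -- u ∉ C; there is another neighbor of v outside C
      have hz : ∃ z, G.Adj v z ∧ z ∉ C ∧ z ≠ u := by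
        by_contra hcon
        push_neg at hcon
        apply huC
        refine SkewForced.force (adj_uv huv).symm ?_
        intro y hy hyu
        by_cases hyC : y ∈ C
        · exact hyC
        · exact absurd (hcon y hy hyC) hyu
      obtain ⟨z, hvz, hzC, hzu⟩ := hz
      by_cases hbig : ∃ z', G.Adj v z' ∧ z' ∉ C ∧ z' ≠ u ∧ z' ≠ z
      · -- impossible: C ∪ {u} would be closed but not everything
        exfalso
        obtain ⟨z', hvz', hz'C, hz'u, hz'z⟩ := hbig
        have hTclosed : ∀ w x, G.Adj w x →
            (∀ y, G.Adj w y → y ≠ x → y ∈ C ∪ {u}) → x ∈ C ∪ {u} := by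
          intro w x hwx hprem
          by_cases hwv : w = v
          · subst hwv
            exfalso
            have h1 : z = x := by
              by_contra h
              rcases hprem z hvz h with hc | hc
              · exact hzC hc
              · exact hzu hc
            have h2 : z' = x := by
              by_contra h
              rcases hprem z' hvz' h with hc | hc
              · exact hz'C hc
              · exact hz'u hc
            exact hz'z (h2.trans h1.symm)
          · left
            refine hCclosed w x hwx ?_
            intro y hy hyx
            rcases hprem y hy hyx with hc | hc
            · exact hc
            · exfalso
              rw [Set.mem_singleton_iff] at hc
              subst hc
              exact hwv ((adj_u_iff huv).mp hy.symm)
        have hzT : z ∈ C ∪ {u} :=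
          skewForced_closed hTclosed
            (fun y hy => by
              by_cases hyu : y = u
              · exact Or.inr (hyu ▸ rfl)
              · exact Or.inl (SkewForced.mem ⟨hy, hyu⟩))
            (hB₁all z)
        rcases hzT with hc | hc
        · exact hzC hc
        · exact hzu hc
      · -- all white neighbors of v are u or z; use B₀ ∪ {z}
        push_neg at hbig
        refine ⟨insert z B₀, ?_, ?_, ?_, ?_⟩
        · intro h
          rcases h with h | h
          · exact hzu h.symm
          · exact huB₀ h
        · intro h
          rcases h with h | h
          · exact (G.ne_of_adj hvz) h
          · exact hvB₀ h
        · calc (insert z B₀).ncard ≤ B₀.ncard + 1 := Set.ncard_insert_le z B₀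
            _ = B₁.ncard := hB₀card
            _ ≤ B.ncard := hB₁card
        · -- forcing
          have hsub : B₀ ⊆ insert z B₀ := Set.subset_insert z B₀
          have huD : SkewForced G (insert z B₀) u := by
            refine SkewForced.force (adj_uv huv).symm ?_
            intro y hy hyu
            by_cases hyC : y ∈ C
            · exact skewForced_mono hsub hyC
            · have hyz : y = z := hbig y hy hyC hyu
              subst hyz
              exact SkewForced.mem (Set.mem_insert y B₀)
          apply Set.eq_univ_of_forall
          intro x
          have : x ∈ skewClosure G (insert z B₀) :=
            skewForced_closed
              (fun w x hwx hprem => SkewForced.force hwx hprem)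
              (fun y hy => by
                by_cases hyu : y = u
                · exact hyu ▸ huD
                · exact SkewForced.mem (Set.mem_insert_of_mem z ⟨hy, hyu⟩))
              (hB₁all x)
          exact this
  · exact ⟨B₁, hu1, hvB₁, hB₁card, hB₁⟩

end Leaf

/-- Leaf stripping: deleting a leaf `u` together with its neighbor `v` does not
change the skew forcing number. -/
theorem skewForcingNumber_leaf_strip [Fintype V] (G : SimpleGraph V) (u v : V)
    (huv : G.neighborSet u = {v}) :
    skewForcingNumber (G.induce ({u, v}ᶜ : Set V)) = skewForcingNumber G := by
  classical
  apply le_antisymm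
  · -- Z(G') ≤ Z(G)
    have hne : {n | ∃ S : Set V, S.ncard = n ∧ IsSkewForcingSet G S}.Nonempty :=
      ⟨_, Set.univ, rfl, univ_isSkewForcingSet G⟩
    obtain ⟨B, hBcard, hBf⟩ := Nat.sInf_mem hne
    obtain ⟨B₂, hu2, hv2, hcard2, hf2⟩ := skewNormalize huv hBf
    have hsub : B₂ ⊆ ({u, v}ᶜ : Set V) := by
      intro x hx
      refine mem_compl_pair.mpr ⟨?_, ?_⟩
      · rintro rfl; exact hu2 hx
      · rintro rfl; exact hv2 hx
    have hforce' := skewForcingRestrict huv hu2 hv2 hf2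
    have hcard' : (Subtype.val ⁻¹' B₂ : Set ↥({u, v}ᶜ : Set V)).ncard = B₂.ncard := by
      rw [← Set.ncard_image_of_injective _ Subtype.val_injective,
        Set.image_preimage_eq_of_subset (by rw [Subtype.range_val]; exact hsub)]
    have h1 : skewForcingNumber (G.induce ({u, v}ᶜ : Set V)) ≤
        (Subtype.val ⁻¹' B₂ : Set ↥({u, v}ᶜ : Set V)).ncard :=
      Nat.sInf_le ⟨_, rfl, hforce'⟩
    rw [hcard'] at h1
    calc skewForcingNumber (G.induce ({u, v}ᶜ : Set V)) ≤ B₂.ncard := h1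
      _ ≤ B.ncard := hcard2
      _ = skewForcingNumber G := hBcard
  · -- Z(G) ≤ Z(G')
    have hne : {n | ∃ S : Set ↥({u, v}ᶜ : Set V), S.ncard = n ∧
        IsSkewForcingSet (G.induce ({u, v}ᶜ : Set V)) S}.Nonempty :=
      ⟨_, Set.univ, rfl, univ_isSkewForcingSet _⟩
    obtain ⟨B', hB'card, hB'f⟩ := Nat.sInf_mem hne
    have hforce := skewForcingLift huv hB'f
    have hcard : (Subtype.val '' B').ncard = B'.ncard :=
      Set.ncard_image_of_injective _ Subtype.val_injective
    calc skewForcingNumber G ≤ (Subtype.val '' B').ncard :=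
        Nat.sInf_le ⟨_, rfl, hforce⟩
      _ = B'.ncard := hcard
      _ = skewForcingNumber (G.induce ({u, v}ᶜ : Set V)) := hB'card
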